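/- arXiv:2103.13743 — 6 statements merged into one kernel-verified Lean document; each statement's English description precedes it below -/
import Mathlib

section
/- Cascaded composition preserves satisfaction: let Σ1 be a dynamical system with input in ℝ^{nd} and output in ℝ^{nz}, Σ2 a dynamical system with input in ℝ^{nz} and output in ℝ^{ny}, and let C1 = (D1, Ω1), C2 = (D2, Ω2) be assume/guarantee contracts with matching input/output spaces. If Σ1 satisfies C1 and Σ2 satisfies C2, then the cascade Σ1 ⊗ Σ2 satisfies the cascaded composition C1 ⊗ C2. -/
/-- A discrete-time signal with values in `ℝ^n`. -/
abbrev Sig (n : ℕ) := ℕ → (Fin n → ℝ)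

/-- A dynamical system: a set-valued map from input signals to output signals. -/
abbrev System (na nb : ℕ) := Sig na → Set (Sig nb)

/-- The system satisfies the contract `(D, Ω)`. -/
def Satisfies {na nb : ℕ} (Sys : System na nb)
    (D : Set (Sig na)) (Ω : Set (Sig na × Sig nb)) : Prop :=
  ∀ d ∈ D, ∀ y ∈ Sys d, (d, y) ∈ Ω

/-- Cascade of two systems. -/
def SysComp {nd nz ny : ℕ} (Sys1 : System nd nz) (Sys2 : System nz ny) : System nd ny :=
  fun d => {y | ∃ z ∈ Sys1 d, y ∈ Sys2 z}

/-- Assumption set of the cascaded composition of contracts. -/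
def CompD {nd nz : ℕ} (D1 : Set (Sig nd)) (Ω1 : Set (Sig nd × Sig nz))
    (D2 : Set (Sig nz)) : Set (Sig nd) :=
  {d | d ∈ D1 ∧ ∀ z : Sig nz, (d, z) ∈ Ω1 → z ∈ D2}

/-- Guarantee set of the cascaded composition of contracts. -/
def CompΩ {nd nz ny : ℕ} (Ω1 : Set (Sig nd × Sig nz)) (Ω2 : Set (Sig nz × Sig ny)) :
    Set (Sig nd × Sig ny) :=
  {p | ∃ z : Sig nz, (p.1, z) ∈ Ω1 ∧ (z, p.2) ∈ Ω2}

/-- Cascaded composition preserves satisfaction: if `Σ1 ⊨ C1` and `Σ2 ⊨ C2`, then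
`Σ1 ⊗ Σ2 ⊨ C1 ⊗ C2`. -/
theorem cascade_satisfies {nd nz ny : ℕ}
    (Sys1 : System nd nz) (Sys2 : System nz ny)
    (D1 : Set (Sig nd)) (Ω1 : Set (Sig nd × Sig nz))
    (D2 : Set (Sig nz)) (Ω2 : Set (Sig nz × Sig ny))
    (h1 : Satisfies Sys1 D1 Ω1) (h2 : Satisfies Sys2 D2 Ω2) :
    Satisfies (SysComp Sys1 Sys2) (CompD D1 Ω1 D2) (CompΩ Ω1 Ω2) := by
  rintro d ⟨hd1, hd2⟩ y ⟨z, hz, hy⟩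
  exact ⟨z, h1 d hd1 z hz, h2 z (hd2 z (h1 d hd1 z hz)) y hy⟩
end

section
/- Let C1 = (D1, Ω1), C2 = (D2, Ω2) and C = (D, Ω) be linear contracts defined by the data (𝔄¹, 𝔄⁰, 𝔞⁰, 𝔊¹, 𝔊⁰, 𝔤⁰), (𝔅¹, 𝔅⁰, 𝔟⁰, ℌ¹, ℌ⁰, 𝔥⁰) and (ℭ¹, ℭ⁰, 𝔠⁰, 𝔍¹, 𝔍⁰, 𝔧⁰) respectively, where C1 has input in S^{nd} and output in S^{nz}, C2 has input in S^{nz} and output in S^{ny}, and C has input in S^{nd} and output in S^{ny}. Write 𝔊^i = [𝔊^i_d, 𝔊^i_z] and ℌ^i = [ℌ^i_z, ℌ^i_y] for i = 0, 1 (block decompositions according to the splitting of the input/output variables). Assume that the triple (ℭ¹, ℭ⁰, 𝔠⁰) is extendable, that the stacked triple ([[ℭ¹, 0], [𝔊¹_d, 𝔊¹_z]], [[ℭ⁰, 0], [𝔊⁰_d, 𝔊⁰_z]], [𝔠⁰; 𝔤⁰]) is extendable, and that the stacked triple ([[ℭ¹, 0, 0], [𝔊¹_d, 𝔊¹_z,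 0], [0, ℌ¹_z, ℌ¹_y]], [[ℭ⁰, 0, 0], [𝔊⁰_d, 𝔊⁰_z, 0], [0, ℌ⁰_z, ℌ⁰_y]], [𝔠⁰; 𝔤⁰; 𝔥⁰]) is extendable. Then C1 ⊗ C2 refines C if and only if the following three implications hold for all vectors d0, d1 ∈ ℝ^{nd}, z0, z1 ∈ ℝ^{nz}, y0, y1 ∈ ℝ^{ny}: (i) if ℭ¹d1 + ℭ⁰d0 ≤ 𝔠⁰ then 𝔄¹d1 + 𝔄⁰d0 ≤ 𝔞⁰; (ii) if ℭ¹d1 + ℭ⁰d0 ≤ 𝔠⁰ and 𝔊¹[d1; z1] + 𝔊⁰[d0; z0] ≤ 𝔤⁰ then 𝔅¹z1 + 𝔅⁰z0 ≤ 𝔟⁰; (iii) if ℭ¹d1 + ℭ⁰d0 ≤ 𝔠⁰, 𝔊¹[d1; z1] + 𝔊⁰[d0; z0] ≤ 𝔤⁰ and ℌ¹[z1; y1] + ℌ⁰[z0; y0] ≤ 𝔥⁰ then 𝔍¹[d1; y1] + 𝔍⁰[d0; y0] ≤ 𝔧⁰. -/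
open Matrix

/-- The assumption set of a linear contract:
`{d : V¹ d(k+1) + V⁰ d(k) ≤ v⁰ for all k}` (entry-wise inequality). -/
def LinAssump {s n : ℕ} (V1 V0 : Matrix (Fin s) (Fin n) ℝ) (v0 : Fin s → ℝ) :
    Set (Sig n) :=
  {d | ∀ k : ℕ, V1 *ᵥ d (k + 1) + V0 *ᵥ d k ≤ v0}

/-- The guarantee set of a linear contract:
`{(d, y) : W¹ [d(k+1); y(k+1)] + W⁰ [d(k); y(k)] ≤ w⁰ for all k}`, where the stacked
vector `[d; y]` is encoded as `Sum.elim d y : Fin na ⊕ Fin nb → ℝ`. -/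
def LinGuar {s na nb : ℕ} (W1 W0 : Matrix (Fin s) (Fin na ⊕ Fin nb) ℝ) (w0 : Fin s → ℝ) :
    Set (Sig na × Sig nb) :=
  {p | ∀ k : ℕ,
    W1 *ᵥ Sum.elim (p.1 (k + 1)) (p.2 (k + 1)) + W0 *ᵥ Sum.elim (p.1 k) (p.2 k) ≤ w0}

/-- A triple `(V¹, V⁰, v⁰)` is extendable if any one-step-feasible pair `(u0, u1)` can be
continued one more step. -/
def Extendable {m n : Type*} [Fintype n] (V1 V0 : Matrix m n ℝ) (v0 : m → ℝ) : Prop :=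
  ∀ u0 u1 : n → ℝ, V1 *ᵥ u1 + V0 *ᵥ u0 ≤ v0 → ∃ u2 : n → ℝ, V1 *ᵥ u2 + V0 *ᵥ u1 ≤ v0

/-- The stacked matrix `[[ℭ, 0], [𝔊_d, 𝔊_z]]`, where the block decomposition
`𝔊 = [𝔊_d, 𝔊_z]` corresponds to the `Sum`-indexed columns of `G`. -/
def Stack2 {sC sG nd nz : ℕ} (C : Matrix (Fin sC) (Fin nd) ℝ)
    (G : Matrix (Fin sG) (Fin nd ⊕ Fin nz) ℝ) :
    Matrix (Fin sC ⊕ Fin sG) (Fin nd ⊕ Fin nz) ℝ :=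
  Matrix.of (Sum.elim (fun i => Sum.elim (C i) (fun _ => 0)) (fun i => G i))

/-- The stacked matrix `[[ℭ, 0, 0], [𝔊_d, 𝔊_z, 0], [0, ℌ_z, ℌ_y]]`, where
`𝔊 = [𝔊_d, 𝔊_z]` and `ℌ = [ℌ_z, ℌ_y]` correspond to the `Sum`-indexed columns of
`G` and `H`. -/
def Stack3 {sC sG sH nd nz ny : ℕ} (C : Matrix (Fin sC) (Fin nd) ℝ)
    (G : Matrix (Fin sG) (Fin nd ⊕ Fin nz) ℝ)
    (H : Matrix (Fin sH) (Fin nz ⊕ Fin ny) ℝ) :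
    Matrix (Fin sC ⊕ Fin sG ⊕ Fin sH) (Fin nd ⊕ Fin nz ⊕ Fin ny) ℝ :=
  Matrix.of (Sum.elim
    (fun i => Sum.elim (C i) (fun _ => 0))
    (Sum.elim
      (fun i => Sum.elim (fun j => G i (Sum.inl j))
        (Sum.elim (fun j => G i (Sum.inr j)) (fun _ => 0)))
      (fun i => Sum.elim (fun _ => 0) (H i))))

lemma elim_le_elim_iff' {α β : Type*} {a c : α → ℝ} {b e : β → ℝ} :
    Sum.elim a b ≤ Sum.elim c e ↔ a ≤ c ∧ b ≤ e := by
  constructor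
  · intro h; exact ⟨fun i => h (Sum.inl i), fun i => h (Sum.inr i)⟩
  · rintro ⟨h1, h2⟩ i
    cases i with
    | inl i => exact h1 i
    | inr i => exact h2 i

lemma elim_add' {α β : Type*} (a c : α → ℝ) (b e : β → ℝ) :
    Sum.elim a b + Sum.elim c e = Sum.elim (a + c) (b + e) := by
  funext i; cases i <;> simp

/-- Extendability yields an infinite feasible signal with prescribed first two values. -/
lemma ext_signal {m n : Type*} [Fintype n] {V1 V0 : Matrix m n ℝ} {v0 : m → ℝ}
    (hext : Extendable V1 V0 v0) (u0 u1 : n → ℝ)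
    (h : V1 *ᵥ u1 + V0 *ᵥ u0 ≤ v0) :
    ∃ d : ℕ → (n → ℝ), d 0 = u0 ∧ d 1 = u1 ∧
      ∀ k, V1 *ᵥ d (k + 1) + V0 *ᵥ d k ≤ v0 := by
  let F : ℕ → {p : (n → ℝ) × (n → ℝ) // V1 *ᵥ p.2 + V0 *ᵥ p.1 ≤ v0} := fun k =>
    Nat.rec ⟨(u0, u1), h⟩
      (fun _ p => ⟨(p.1.2, Classical.choose (hext p.1.1 p.1.2 p.2)),
        Classical.choose_spec (hext p.1.1 p.1.2 p.2)⟩) k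
  refine ⟨fun k => (F k).1.1, rfl, rfl, fun k => ?_⟩
  show V1 *ᵥ (F k).1.2 + V0 *ᵥ (F k).1.1 ≤ v0
  exact (F k).2

lemma stack2_mulVec {sC sG nd nz : ℕ} (C : Matrix (Fin sC) (Fin nd) ℝ)
    (G : Matrix (Fin sG) (Fin nd ⊕ Fin nz) ℝ) (u : Fin nd ⊕ Fin nz → ℝ) :
    Stack2 C G *ᵥ u = Sum.elim (C *ᵥ (u ∘ Sum.inl)) (G *ᵥ u) := by
  funext i
  cases i with
  | inl i =>
      simp [Stack2, mulVec, dotProduct, Fintype.sum_sum_type, Function.comp]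
  | inr i =>
      simp [Stack2, mulVec, dotProduct]

lemma stack3_mulVec {sC sG sH nd nz ny : ℕ} (C : Matrix (Fin sC) (Fin nd) ℝ)
    (G : Matrix (Fin sG) (Fin nd ⊕ Fin nz) ℝ)
    (H : Matrix (Fin sH) (Fin nz ⊕ Fin ny) ℝ) (u : Fin nd ⊕ (Fin nz ⊕ Fin ny) → ℝ) :
    Stack3 C G H *ᵥ u = Sum.elim (C *ᵥ (u ∘ Sum.inl))
      (Sum.elim
        (G *ᵥ Sum.elim (u ∘ Sum.inl) (fun j => u (Sum.inr (Sum.inl j))))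
        (H *ᵥ (u ∘ Sum.inr))) := by
  funext i
  rcases i with i | i | i <;>
    simp [Stack3, mulVec, dotProduct, Fintype.sum_sum_type, Function.comp]

/-- Theorem 1 (compositional refinement): under the extendability assumptions,
`C1 ⊗ C2 ≼ C` if and only if the three vector-inequality implications hold. -/
theorem compositional_refinement_iff {nd nz ny sA sG sB sH sC sJ : ℕ}
    (A1 A0 : Matrix (Fin sA) (Fin nd) ℝ) (a0 : Fin sA → ℝ)
    (G1 G0 : Matrix (Fin sG) (Fin nd ⊕ Fin nz) ℝ) (g0 : Fin sG → ℝ)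
    (B1 B0 : Matrix (Fin sB) (Fin nz) ℝ) (b0 : Fin sB → ℝ)
    (H1 H0 : Matrix (Fin sH) (Fin nz ⊕ Fin ny) ℝ) (h0 : Fin sH → ℝ)
    (Cc1 Cc0 : Matrix (Fin sC) (Fin nd) ℝ) (c0 : Fin sC → ℝ)
    (J1 J0 : Matrix (Fin sJ) (Fin nd ⊕ Fin ny) ℝ) (j0 : Fin sJ → ℝ)
    (hext1 : Extendable Cc1 Cc0 c0)
    (hext2 : Extendable (Stack2 Cc1 G1) (Stack2 Cc0 G0) (Sum.elim c0 g0))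
    (hext3 : Extendable (Stack3 Cc1 G1 H1) (Stack3 Cc0 G0 H0)
      (Sum.elim c0 (Sum.elim g0 h0))) :
    (LinAssump Cc1 Cc0 c0 ⊆
        CompD (LinAssump A1 A0 a0) (LinGuar G1 G0 g0) (LinAssump B1 B0 b0) ∧
      CompΩ (LinGuar G1 G0 g0) (LinGuar H1 H0 h0)
          ∩ (LinAssump Cc1 Cc0 c0 ×ˢ (Set.univ : Set (Sig ny))) ⊆
        LinGuar J1 J0 j0 ∩ (LinAssump Cc1 Cc0 c0 ×ˢ (Set.univ : Set (Sig ny)))) ↔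
    ((∀ d0 d1 : Fin nd → ℝ,
        Cc1 *ᵥ d1 + Cc0 *ᵥ d0 ≤ c0 → A1 *ᵥ d1 + A0 *ᵥ d0 ≤ a0) ∧
     (∀ (d0 d1 : Fin nd → ℝ) (z0 z1 : Fin nz → ℝ),
        Cc1 *ᵥ d1 + Cc0 *ᵥ d0 ≤ c0 →
        G1 *ᵥ Sum.elim d1 z1 + G0 *ᵥ Sum.elim d0 z0 ≤ g0 →
        B1 *ᵥ z1 + B0 *ᵥ z0 ≤ b0) ∧
     (∀ (d0 d1 : Fin nd → ℝ) (z0 z1 : Fin nz → ℝ) (y0 y1 : Fin ny → ℝ),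
        Cc1 *ᵥ d1 + Cc0 *ᵥ d0 ≤ c0 →
        G1 *ᵥ Sum.elim d1 z1 + G0 *ᵥ Sum.elim d0 z0 ≤ g0 →
        H1 *ᵥ Sum.elim z1 y1 + H0 *ᵥ Sum.elim z0 y0 ≤ h0 →
        J1 *ᵥ Sum.elim d1 y1 + J0 *ᵥ Sum.elim d0 y0 ≤ j0)) := by
  constructor
  · rintro ⟨hD, hΩ⟩
    refine ⟨?_, ?_, ?_⟩
    · -- (i)
      intro d0 d1 hc
      obtain ⟨d, hd0, hd1, hdall⟩ := ext_signal hext1 d0 d1 hc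
      have hmem : d ∈ LinAssump Cc1 Cc0 c0 := hdall
      have h := (hD hmem).1 0
      rwa [show d (0 + 1) = d1 from hd1, hd0] at h
    · -- (ii)
      intro d0 d1 z0 z1 hc hg
      have hst : Stack2 Cc1 G1 *ᵥ Sum.elim d1 z1 + Stack2 Cc0 G0 *ᵥ Sum.elim d0 z0
          ≤ Sum.elim c0 g0 := by
        rw [stack2_mulVec, stack2_mulVec, elim_add', elim_le_elim_iff']
        refine ⟨?_, hg⟩
        simpa [Sum.elim_comp_inl] using hc
      obtain ⟨w, hw0, hw1, hwall⟩ := ext_signal hext2 _ _ hst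
      set d : Sig nd := fun k => w k ∘ Sum.inl with hd
      set z : Sig nz := fun k j => w k (Sum.inr j) with hz
      have hwe : ∀ k, Sum.elim (d k) (z k) = w k := by
        intro k; funext i; cases i <;> rfl
      have hsplit : ∀ k, (Cc1 *ᵥ d (k + 1) + Cc0 *ᵥ d k ≤ c0) ∧
          (G1 *ᵥ w (k + 1) + G0 *ᵥ w k ≤ g0) := by
        intro k
        have h := hwall k
        rw [stack2_mulVec, stack2_mulVec, elim_add'] at h
        exact elim_le_elim_iff'.mp h
      have hdC : d ∈ LinAssump Cc1 Cc0 c0 := fun k => (hsplit k).1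
      have hdz : (d, z) ∈ LinGuar G1 G0 g0 := by
        intro k
        show G1 *ᵥ Sum.elim (d (k + 1)) (z (k + 1)) + G0 *ᵥ Sum.elim (d k) (z k) ≤ g0
        rw [hwe, hwe]; exact (hsplit k).2
      have hzB := (hD hdC).2 z hdz
      have h := hzB 0
      have hz0 : z 0 = z0 := by funext j; simp [hz, hw0]
      have hz1 : z (0 + 1) = z1 := by funext j; simp [hz, hw1]
      rwa [hz0, hz1] at h
    · -- (iii)
      intro d0 d1 z0 z1 y0 y1 hc hg hh
      have hst : Stack3 Cc1 G1 H1 *ᵥ Sum.elim d1 (Sum.elim z1 y1) +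
          Stack3 Cc0 G0 H0 *ᵥ Sum.elim d0 (Sum.elim z0 y0)
          ≤ Sum.elim c0 (Sum.elim g0 h0) := by
        rw [stack3_mulVec, stack3_mulVec, elim_add', elim_add', elim_le_elim_iff',
          elim_le_elim_iff']
        refine ⟨?_, ?_, ?_⟩
        · simpa [Sum.elim_comp_inl] using hc
        · simpa [Sum.elim_comp_inl] using hg
        · simpa [Sum.elim_comp_inr] using hh
      obtain ⟨w, hw0, hw1, hwall⟩ := ext_signal hext3 _ _ hst
      set d : Sig nd := fun k => w k ∘ Sum.inl with hdd
      set z : Sig nz := fun k j => w k (Sum.inr (Sum.inl j)) with hzz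
      set y : Sig ny := fun k j => w k (Sum.inr (Sum.inr j)) with hyy
      have hwedz : ∀ k, Sum.elim (d k) (z k) = Sum.elim (w k ∘ Sum.inl)
          (fun j => w k (Sum.inr (Sum.inl j))) := fun k => rfl
      have hwezy : ∀ k, Sum.elim (z k) (y k) = w k ∘ Sum.inr := by
        intro k; funext i; cases i <;> rfl
      have hsplit : ∀ k, (Cc1 *ᵥ d (k + 1) + Cc0 *ᵥ d k ≤ c0) ∧
          (G1 *ᵥ Sum.elim (d (k + 1)) (z (k + 1)) +
            G0 *ᵥ Sum.elim (d k) (z k) ≤ g0) ∧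
          (H1 *ᵥ Sum.elim (z (k + 1)) (y (k + 1)) +
            H0 *ᵥ Sum.elim (z k) (y k) ≤ h0) := by
        intro k
        have h := hwall k
        rw [stack3_mulVec, stack3_mulVec, elim_add', elim_add', elim_le_elim_iff',
          elim_le_elim_iff'] at h
        refine ⟨h.1, ?_, ?_⟩
        · rw [hwedz, hwedz]; exact h.2.1
        · rw [hwezy, hwezy]; exact h.2.2
      have hdC : d ∈ LinAssump Cc1 Cc0 c0 := fun k => (hsplit k).1
      have hdz : (d, z) ∈ LinGuar G1 G0 g0 := fun k => (hsplit k).2.1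
      have hzy : (z, y) ∈ LinGuar H1 H0 h0 := fun k => (hsplit k).2.2
      have hmem : (d, y) ∈ CompΩ (LinGuar G1 G0 g0) (LinGuar H1 H0 h0) ∩
          (LinAssump Cc1 Cc0 c0 ×ˢ (Set.univ : Set (Sig ny))) :=
        ⟨⟨z, hdz, hzy⟩, hdC, trivial⟩
      have hJ : J1 *ᵥ Sum.elim (d (0 + 1)) (y (0 + 1)) +
          J0 *ᵥ Sum.elim (d 0) (y 0) ≤ j0 := (hΩ hmem).1 0
      have hd0 : d 0 = d0 := by funext j; simp [hdd, hw0]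
      have hd1 : d (0 + 1) = d1 := by funext j; simp [hdd, hw1]
      have hy0 : y 0 = y0 := by funext j; simp [hyy, hw0]
      have hy1 : y (0 + 1) = y1 := by funext j; simp [hyy, hw1]
      rwa [hd0, hd1, hy0, hy1] at hJ
  · rintro ⟨h1, h2, h3⟩
    constructor
    · intro d hd
      exact ⟨fun k => h1 _ _ (hd k), fun z hz k => h2 _ _ _ _ (hd k) (hz k)⟩
    · rintro ⟨d, y⟩ ⟨⟨z, hdz, hzy⟩, hd, -⟩
      exact ⟨fun k => h3 _ _ _ _ _ _ (hd k) (hdz k) (hzy k), hd, trivial⟩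
end

section
/- Forward direction for assumptions, no extendability needed: let C1 = (D1, Ω1), C2 = (D2, Ω2), C = (D, Ω) be linear contracts defined by the data (𝔄¹, 𝔄⁰, 𝔞⁰, 𝔊¹, 𝔊⁰, 𝔤⁰), (𝔅¹, 𝔅⁰, 𝔟⁰, ℌ¹, ℌ⁰, 𝔥⁰) and (ℭ¹, ℭ⁰, 𝔠⁰, 𝔍¹, 𝔍⁰, 𝔧⁰). Suppose the following two implications hold for all vectors d0, d1 ∈ ℝ^{nd}, z0, z1 ∈ ℝ^{nz}: (i) if ℭ¹d1 + ℭ⁰d0 ≤ 𝔠⁰ then 𝔄¹d1 + 𝔄⁰d0 ≤ 𝔞⁰; (ii) if ℭ¹d1 + ℭ⁰d0 ≤ 𝔠⁰ and 𝔊¹[d1; z1] + 𝔊⁰[d0; z0] ≤ 𝔤⁰ then 𝔅¹z1 + 𝔅⁰z0 ≤ 𝔟⁰. Then D ⊆ D⊗, where D⊗ is the assumption set of the cascaded composition C1 ⊗ C2. -/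
open Matrix

/-- Forward direction for assumptions (no extendability needed): the two vector
implications yield `D ⊆ D⊗`. -/
theorem assumptions_subset_of_implications {nd nz ny sA sG sB sH sC : ℕ}
    (A1 A0 : Matrix (Fin sA) (Fin nd) ℝ) (a0 : Fin sA → ℝ)
    (G1 G0 : Matrix (Fin sG) (Fin nd ⊕ Fin nz) ℝ) (g0 : Fin sG → ℝ)
    (B1 B0 : Matrix (Fin sB) (Fin nz) ℝ) (b0 : Fin sB → ℝ)
    (H1 H0 : Matrix (Fin sH) (Fin nz ⊕ Fin ny) ℝ) (h0 : Fin sH → ℝ)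
    (Cc1 Cc0 : Matrix (Fin sC) (Fin nd) ℝ) (c0 : Fin sC → ℝ)
    (himp1 : ∀ d0 d1 : Fin nd → ℝ,
      Cc1 *ᵥ d1 + Cc0 *ᵥ d0 ≤ c0 → A1 *ᵥ d1 + A0 *ᵥ d0 ≤ a0)
    (himp2 : ∀ (d0 d1 : Fin nd → ℝ) (z0 z1 : Fin nz → ℝ),
      Cc1 *ᵥ d1 + Cc0 *ᵥ d0 ≤ c0 →
      G1 *ᵥ Sum.elim d1 z1 + G0 *ᵥ Sum.elim d0 z0 ≤ g0 →
      B1 *ᵥ z1 + B0 *ᵥ z0 ≤ b0) :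
    LinAssump Cc1 Cc0 c0 ⊆
      CompD (LinAssump A1 A0 a0) (LinGuar G1 G0 g0) (LinAssump B1 B0 b0) := by
  intro d hd
  exact ⟨fun k => himp1 _ _ (hd k), fun z hz k => himp2 _ _ _ _ (hd k) (hz k)⟩
end

section
/- Forward direction for guarantees, no extendability needed: let C1 = (D1, Ω1), C2 = (D2, Ω2), C = (D, Ω) be linear contracts defined by the data (𝔄¹, 𝔄⁰, 𝔞⁰, 𝔊¹, 𝔊⁰, 𝔤⁰), (𝔅¹, 𝔅⁰, 𝔟⁰, ℌ¹, ℌ⁰, 𝔥⁰) and (ℭ¹, ℭ⁰, 𝔠⁰, 𝔍¹, 𝔍⁰, 𝔧⁰). Suppose the following implication holds for all vectors d0, d1 ∈ ℝ^{nd}, z0, z1 ∈ ℝ^{nz}, y0, y1 ∈ ℝ^{ny}: if ℭ¹d1 + ℭ⁰d0 ≤ 𝔠⁰, 𝔊¹[d1; z1] + 𝔊⁰[d0; z0] ≤ 𝔤⁰ and ℌ¹[z1; y1] + ℌ⁰[z0; y0] ≤ 𝔥⁰, then 𝔍¹[d1; y1] + 𝔍⁰[d0; y0] ≤ 𝔧⁰.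 Then Ω⊗ ∩ (D × S^{ny}) ⊆ Ω ∩ (D × S^{ny}), where Ω⊗ is the guarantee set of the cascaded composition C1 ⊗ C2. -/
open Matrix

/-- Forward direction for guarantees (no extendability needed): the third vector
implication yields `Ω⊗ ∩ (D × S^{ny}) ⊆ Ω ∩ (D × S^{ny})`. -/
theorem guarantees_subset_of_implication {nd nz ny sG sH sC sJ : ℕ}
    (G1 G0 : Matrix (Fin sG) (Fin nd ⊕ Fin nz) ℝ) (g0 : Fin sG → ℝ)
    (H1 H0 : Matrix (Fin sH) (Fin nz ⊕ Fin ny) ℝ) (h0 : Fin sH → ℝ)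
    (Cc1 Cc0 : Matrix (Fin sC) (Fin nd) ℝ) (c0 : Fin sC → ℝ)
    (J1 J0 : Matrix (Fin sJ) (Fin nd ⊕ Fin ny) ℝ) (j0 : Fin sJ → ℝ)
    (himp : ∀ (d0 d1 : Fin nd → ℝ) (z0 z1 : Fin nz → ℝ) (y0 y1 : Fin ny → ℝ),
      Cc1 *ᵥ d1 + Cc0 *ᵥ d0 ≤ c0 →
      G1 *ᵥ Sum.elim d1 z1 + G0 *ᵥ Sum.elim d0 z0 ≤ g0 →
      H1 *ᵥ Sum.elim z1 y1 + H0 *ᵥ Sum.elim z0 y0 ≤ h0 →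
      J1 *ᵥ Sum.elim d1 y1 + J0 *ᵥ Sum.elim d0 y0 ≤ j0) :
    CompΩ (LinGuar G1 G0 g0) (LinGuar H1 H0 h0)
        ∩ (LinAssump Cc1 Cc0 c0 ×ˢ (Set.univ : Set (Sig ny))) ⊆
      LinGuar J1 J0 j0 ∩ (LinAssump Cc1 Cc0 c0 ×ˢ (Set.univ : Set (Sig ny))) := by
  rintro ⟨d, y⟩ ⟨⟨z, hG, hH⟩, hD, -⟩
  exact ⟨fun k => himp (d k) (d (k+1)) (z k) (z (k+1)) (y k) (y (k+1)) (hD k) (hG k) (hH k), hD, trivial⟩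
end

section
/- Optimization-based characterization of compositional refinement (Proposition 3, implication form): under the assumptions of the main theorem (the triples (ℭ¹, ℭ⁰, 𝔠⁰), ([[ℭ¹, 0], [𝔊¹_d, 𝔊¹_z]], [[ℭ⁰, 0], [𝔊⁰_d, 𝔊⁰_z]], [𝔠⁰; 𝔤⁰]) and ([[ℭ¹, 0, 0], [𝔊¹_d, 𝔊¹_z, 0], [0, ℌ¹_z, ℌ¹_y]], [[ℭ⁰, 0, 0], [𝔊⁰_d, 𝔊⁰_z, 0], [0, ℌ⁰_z, ℌ⁰_y]], [𝔠⁰; 𝔤⁰; 𝔥⁰]) are extendable), the refinement C1 ⊗ C2 ≼ C holds if and only if all three of the following hold: (a) for every (d0, d1) with ℭ¹d1 + ℭ⁰d0 ≤ 𝔠⁰ and every row index j, e_jᵀ(𝔄¹d1 + 𝔄⁰d0 − 𝔞⁰) ≤ 0; (b) for every (d0, d1, z0, z1) with ℭ¹d1 + ℭ⁰d0 ≤ 𝔠⁰ and 𝔊¹[d1; z1] + 𝔊⁰[d0; z0] ≤ 𝔤⁰, and every row index j, e_jᵀ(𝔅¹z1 + 𝔅⁰z0 − 𝔟⁰) ≤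 0; (c) for every (d0, d1, z0, z1, y0, y1) with ℭ¹d1 + ℭ⁰d0 ≤ 𝔠⁰, 𝔊¹[d1; z1] + 𝔊⁰[d0; z0] ≤ 𝔤⁰ and ℌ¹[z1; y1] + ℌ⁰[z0; y0] ≤ 𝔥⁰, and every row index j, e_jᵀ(𝔍¹[d1; y1] + 𝔍⁰[d0; y0] − 𝔧⁰) ≤ 0. Here e_j denotes the j-th standard basis vector. -/
open Matrix

private lemma single_dot_iff {s : ℕ} {w v : Fin s → ℝ} :
    (∀ j, Pi.single j (1 : ℝ) ⬝ᵥ (w - v) ≤ 0) ↔ w ≤ v := by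
  constructor
  · intro h j
    have := h j
    rw [single_dotProduct, one_mul] at this
    simpa [sub_nonpos, Pi.sub_apply] using this
  · intro h j
    rw [single_dotProduct, one_mul]
    simpa [sub_nonpos, Pi.sub_apply] using h j

private lemma signal_of_extendable {m n : Type*} [Fintype n] {V1 V0 : Matrix m n ℝ}
    {v0 : m → ℝ} (hext : Extendable V1 V0 v0) {u0 u1 : n → ℝ}
    (h : V1 *ᵥ u1 + V0 *ᵥ u0 ≤ v0) :
    ∃ u : ℕ → (n → ℝ), u 0 = u0 ∧ u 1 = u1 ∧
      ∀ k, V1 *ᵥ u (k + 1) + V0 *ᵥ u k ≤ v0 := by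
  choose next hnext using hext
  let T := {p : (n → ℝ) × (n → ℝ) // V1 *ᵥ p.2 + V0 *ᵥ p.1 ≤ v0}
  let step : T → T := fun p => ⟨(p.1.2, next p.1.1 p.1.2 p.2), hnext _ _ _⟩
  let f : ℕ → T := fun k => step^[k] ⟨(u0, u1), h⟩
  have hshift : ∀ k, (f (k + 1)).1.1 = (f k).1.2 := by
    intro k
    show (step^[k + 1] _).1.1 = _
    rw [Function.iterate_succ_apply']
  refine ⟨fun k => (f k).1.1, rfl, ?_, ?_⟩
  · show (f 1).1.1 = u1
    rw [hshift 0]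
    rfl
  · intro k
    show V1 *ᵥ (f (k + 1)).1.1 + V0 *ᵥ (f k).1.1 ≤ v0
    rw [hshift k]
    exact (f k).2

private lemma stack2_mulVec_inl {sC sG nd nz : ℕ} (C : Matrix (Fin sC) (Fin nd) ℝ)
    (G : Matrix (Fin sG) (Fin nd ⊕ Fin nz) ℝ) (u : Fin nd ⊕ Fin nz → ℝ) (i : Fin sC) :
    (Stack2 C G *ᵥ u) (Sum.inl i) = (C *ᵥ (u ∘ Sum.inl)) i := by
  simp [Stack2, Matrix.mulVec, dotProduct, Fintype.sum_sum_type, Function.comp]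

private lemma stack2_mulVec_inr {sC sG nd nz : ℕ} (C : Matrix (Fin sC) (Fin nd) ℝ)
    (G : Matrix (Fin sG) (Fin nd ⊕ Fin nz) ℝ) (u : Fin nd ⊕ Fin nz → ℝ) (i : Fin sG) :
    (Stack2 C G *ᵥ u) (Sum.inr i) = (G *ᵥ u) i := by
  simp [Stack2, Matrix.mulVec, dotProduct]

private lemma stack3_mulVec_inl {sC sG sH nd nz ny : ℕ} (C : Matrix (Fin sC) (Fin nd) ℝ)
    (G : Matrix (Fin sG) (Fin nd ⊕ Fin nz) ℝ) (H : Matrix (Fin sH) (Fin nz ⊕ Fin ny) ℝ)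
    (u : Fin nd ⊕ (Fin nz ⊕ Fin ny) → ℝ) (i : Fin sC) :
    (Stack3 C G H *ᵥ u) (Sum.inl i) = (C *ᵥ (u ∘ Sum.inl)) i := by
  simp [Stack3, Matrix.mulVec, dotProduct, Fintype.sum_sum_type, Function.comp]

private lemma stack3_mulVec_inrl {sC sG sH nd nz ny : ℕ} (C : Matrix (Fin sC) (Fin nd) ℝ)
    (G : Matrix (Fin sG) (Fin nd ⊕ Fin nz) ℝ) (H : Matrix (Fin sH) (Fin nz ⊕ Fin ny) ℝ)
    (u : Fin nd ⊕ (Fin nz ⊕ Fin ny) → ℝ) (i : Fin sG) :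
    (Stack3 C G H *ᵥ u) (Sum.inr (Sum.inl i)) =
      (G *ᵥ Sum.elim (u ∘ Sum.inl) (fun j => u (Sum.inr (Sum.inl j)))) i := by
  simp [Stack3, Matrix.mulVec, dotProduct, Fintype.sum_sum_type, Function.comp]

private lemma stack3_mulVec_inrr {sC sG sH nd nz ny : ℕ} (C : Matrix (Fin sC) (Fin nd) ℝ)
    (G : Matrix (Fin sG) (Fin nd ⊕ Fin nz) ℝ) (H : Matrix (Fin sH) (Fin nz ⊕ Fin ny) ℝ)
    (u : Fin nd ⊕ (Fin nz ⊕ Fin ny) → ℝ) (i : Fin sH) :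
    (Stack3 C G H *ᵥ u) (Sum.inr (Sum.inr i)) = (H *ᵥ (u ∘ Sum.inr)) i := by
  simp [Stack3, Matrix.mulVec, dotProduct, Fintype.sum_sum_type, Function.comp]

/-- Proposition 3 (optimization-based characterization): under the extendability
assumptions, `C1 ⊗ C2 ≼ C` holds iff the three families of row-wise (LP) conditions
`e_jᵀ(⋯) ≤ 0` all hold. -/
theorem compositional_refinement_iff_rowwise {nd nz ny sA sG sB sH sC sJ : ℕ}
    (A1 A0 : Matrix (Fin sA) (Fin nd) ℝ) (a0 : Fin sA → ℝ)
    (G1 G0 : Matrix (Fin sG) (Fin nd ⊕ Fin nz) ℝ) (g0 : Fin sG → ℝ)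
    (B1 B0 : Matrix (Fin sB) (Fin nz) ℝ) (b0 : Fin sB → ℝ)
    (H1 H0 : Matrix (Fin sH) (Fin nz ⊕ Fin ny) ℝ) (h0 : Fin sH → ℝ)
    (Cc1 Cc0 : Matrix (Fin sC) (Fin nd) ℝ) (c0 : Fin sC → ℝ)
    (J1 J0 : Matrix (Fin sJ) (Fin nd ⊕ Fin ny) ℝ) (j0 : Fin sJ → ℝ)
    (hext1 : Extendable Cc1 Cc0 c0)
    (hext2 : Extendable (Stack2 Cc1 G1) (Stack2 Cc0 G0) (Sum.elim c0 g0))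
    (hext3 : Extendable (Stack3 Cc1 G1 H1) (Stack3 Cc0 G0 H0)
      (Sum.elim c0 (Sum.elim g0 h0))) :
    (LinAssump Cc1 Cc0 c0 ⊆
        CompD (LinAssump A1 A0 a0) (LinGuar G1 G0 g0) (LinAssump B1 B0 b0) ∧
      CompΩ (LinGuar G1 G0 g0) (LinGuar H1 H0 h0)
          ∩ (LinAssump Cc1 Cc0 c0 ×ˢ (Set.univ : Set (Sig ny))) ⊆
        LinGuar J1 J0 j0 ∩ (LinAssump Cc1 Cc0 c0 ×ˢ (Set.univ : Set (Sig ny)))) ↔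
    ((∀ d0 d1 : Fin nd → ℝ, Cc1 *ᵥ d1 + Cc0 *ᵥ d0 ≤ c0 →
        ∀ j : Fin sA, Pi.single j (1 : ℝ) ⬝ᵥ (A1 *ᵥ d1 + A0 *ᵥ d0 - a0) ≤ 0) ∧
     (∀ (d0 d1 : Fin nd → ℝ) (z0 z1 : Fin nz → ℝ),
        Cc1 *ᵥ d1 + Cc0 *ᵥ d0 ≤ c0 →
        G1 *ᵥ Sum.elim d1 z1 + G0 *ᵥ Sum.elim d0 z0 ≤ g0 →
        ∀ j : Fin sB, Pi.single j (1 : ℝ) ⬝ᵥ (B1 *ᵥ z1 + B0 *ᵥ z0 - b0) ≤ 0) ∧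
     (∀ (d0 d1 : Fin nd → ℝ) (z0 z1 : Fin nz → ℝ) (y0 y1 : Fin ny → ℝ),
        Cc1 *ᵥ d1 + Cc0 *ᵥ d0 ≤ c0 →
        G1 *ᵥ Sum.elim d1 z1 + G0 *ᵥ Sum.elim d0 z0 ≤ g0 →
        H1 *ᵥ Sum.elim z1 y1 + H0 *ᵥ Sum.elim z0 y0 ≤ h0 →
        ∀ j : Fin sJ,
          Pi.single j (1 : ℝ) ⬝ᵥ (J1 *ᵥ Sum.elim d1 y1 + J0 *ᵥ Sum.elim d0 y0 - j0) ≤ 0)) := by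
  constructor
  · rintro ⟨hD, hΩ⟩
    refine ⟨?_, ?_, ?_⟩
    · -- (a)
      intro d0 d1 hC
      apply single_dot_iff.mpr
      obtain ⟨u, hu0, hu1, hu⟩ := signal_of_extendable hext1 hC
      have hmem : u ∈ LinAssump Cc1 Cc0 c0 := hu
      have := (hD hmem).1 0
      rwa [hu0, hu1] at this
    · -- (b)
      intro d0 d1 z0 z1 hC hG
      apply single_dot_iff.mpr
      have hstack : Stack2 Cc1 G1 *ᵥ Sum.elim d1 z1 + Stack2 Cc0 G0 *ᵥ Sum.elim d0 z0 ≤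
          Sum.elim c0 g0 := by
        rintro (i | i)
        · simpa [Pi.add_apply, stack2_mulVec_inl, Sum.elim_comp_inl] using hC i
        · simpa [Pi.add_apply, stack2_mulVec_inr] using hG i
      obtain ⟨u, hu0, hu1, hu⟩ := signal_of_extendable hext2 hstack
      set d : Sig nd := fun k => u k ∘ Sum.inl with hd
      set z : Sig nz := fun k => u k ∘ Sum.inr with hz
      have helim : ∀ k, Sum.elim (d k) (z k) = u k := by
        intro k; funext j; cases j <;> rfl
      have hdC : d ∈ LinAssump Cc1 Cc0 c0 := by
        intro k i
        have := hu k (Sum.inl i)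
        rwa [Pi.add_apply, stack2_mulVec_inl, stack2_mulVec_inl] at this
      have hGz : (d, z) ∈ LinGuar G1 G0 g0 := by
        intro k i
        have := hu k (Sum.inr i)
        rw [Pi.add_apply, stack2_mulVec_inr, stack2_mulVec_inr] at this
        simpa [helim] using this
      have hzB := (hD hdC).2 z hGz 0
      have hd0 : z 0 = z0 := by rw [hz]; simp [hu0]
      have hd1 : z 1 = z1 := by rw [hz]; simp [hu1]
      rwa [hd0, hd1] at hzB
    · -- (c)
      intro d0 d1 z0 z1 y0 y1 hC hG hH
      apply single_dot_iff.mpr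
      have hstack : Stack3 Cc1 G1 H1 *ᵥ Sum.elim d1 (Sum.elim z1 y1) +
          Stack3 Cc0 G0 H0 *ᵥ Sum.elim d0 (Sum.elim z0 y0) ≤
          Sum.elim c0 (Sum.elim g0 h0) := by
        rintro (i | i | i)
        · simpa [Pi.add_apply, stack3_mulVec_inl, Sum.elim_comp_inl] using hC i
        · have e1 : Sum.elim (Sum.elim d1 (Sum.elim z1 y1) ∘ Sum.inl)
              (fun j => Sum.elim d1 (Sum.elim z1 y1) (Sum.inr (Sum.inl j))) =
              Sum.elim d1 z1 := by funext j; cases j <;> rfl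
          have e0 : Sum.elim (Sum.elim d0 (Sum.elim z0 y0) ∘ Sum.inl)
              (fun j => Sum.elim d0 (Sum.elim z0 y0) (Sum.inr (Sum.inl j))) =
              Sum.elim d0 z0 := by funext j; cases j <;> rfl
          have := hG i
          rw [Pi.add_apply, stack3_mulVec_inrl, stack3_mulVec_inrl, e1, e0]
          simpa using this
        · have e1 : (Sum.elim d1 (Sum.elim z1 y1) ∘ Sum.inr) = Sum.elim z1 y1 := rfl
          have e0 : (Sum.elim d0 (Sum.elim z0 y0) ∘ Sum.inr) = Sum.elim z0 y0 := rfl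
          rw [Pi.add_apply, stack3_mulVec_inrr, stack3_mulVec_inrr, e1, e0]
          simpa using hH i
      obtain ⟨u, hu0, hu1, hu⟩ := signal_of_extendable hext3 hstack
      set d : Sig nd := fun k => u k ∘ Sum.inl with hd
      set z : Sig nz := fun k j => u k (Sum.inr (Sum.inl j)) with hz
      set y : Sig ny := fun k j => u k (Sum.inr (Sum.inr j)) with hy
      have hdC : d ∈ LinAssump Cc1 Cc0 c0 := by
        intro k i
        have := hu k (Sum.inl i)
        rwa [Pi.add_apply, stack3_mulVec_inl, stack3_mulVec_inl] at this
      have hGz : (d, z) ∈ LinGuar G1 G0 g0 := by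
        intro k i
        have := hu k (Sum.inr (Sum.inl i))
        rwa [Pi.add_apply, stack3_mulVec_inrl, stack3_mulVec_inrl] at this
      have hHz : (z, y) ∈ LinGuar H1 H0 h0 := by
        intro k i
        have := hu k (Sum.inr (Sum.inr i))
        rw [Pi.add_apply, stack3_mulVec_inrr, stack3_mulVec_inrr] at this
        have e : ∀ m, Sum.elim (z m) (y m) = u m ∘ Sum.inr := by
          intro m; funext j; cases j <;> rfl
        rw [e, e]
        exact this
      have hmem : (d, y) ∈ CompΩ (LinGuar G1 G0 g0) (LinGuar H1 H0 h0) ∩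
          (LinAssump Cc1 Cc0 c0 ×ˢ (Set.univ : Set (Sig ny))) :=
        ⟨⟨z, hGz, hHz⟩, hdC, trivial⟩
      have hJ := (hΩ hmem).1 0
      have ed0 : d 0 = d0 := by rw [hd]; simp [hu0]
      have ed1 : d 1 = d1 := by rw [hd]; simp [hu1]
      have ey0 : y 0 = y0 := by rw [hy]; simp [hu0]
      have ey1 : y 1 = y1 := by rw [hy]; simp [hu1]
      simpa [ed0, ed1, ey0, ey1] using hJ
  · rintro ⟨ha, hb, hc⟩
    constructor
    · intro d hd
      refine ⟨fun k => single_dot_iff.mp (ha (d k) (d (k + 1)) (hd k)), ?_⟩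
      intro z hz k
      exact single_dot_iff.mp (hb (d k) (d (k + 1)) (z k) (z (k + 1)) (hd k) (hz k))
    · rintro ⟨d, y⟩ ⟨⟨z, hz1, hz2⟩, hdC, -⟩
      refine ⟨fun k => ?_, hdC, trivial⟩
      exact single_dot_iff.mp
        (hc (d k) (d (k + 1)) (z k) (z (k + 1)) (y k) (y (k + 1)) (hdC k) (hz1 k) (hz2 k))
end

section
/- One-step headway invariance of the affine follower controller (case study): let h > 0, Δt > 0, τ ≥ 0, ξ_down ≥ 0, δ_p ≥ 0 be real parameters and set λ = ξ_down + δ_p. Suppose p_m, v_m, p_f, v_f, p_m⁺, p_f⁺, v_f⁺, a_f ∈ ℝ satisfy: (measurement assumption) p_m⁺ − p_m − Δt·v_m ≥ −τ·v_m − ξ_down; (follower dynamics) p_f⁺ = p_f + Δt·v_f and v_f⁺ = v_f + Δt·a_f with a_f = (p_m − p_f − h·v_f)/(h·Δt) + ((Δt − τ)·v_m)/(h·Δt) − v_f/h − λ/(h·Δt). Then p_m⁺ − p_f⁺ − h·v_f⁺ ≥ δ_p. -/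
/-- One-step headway invariance of the affine follower controller (case study): under
the measurement assumption and the double-integrator follower dynamics with the affine
control law (with `λ = ξ_down + δ_p`), the robustified headway guarantee
`p_m⁺ − p_f⁺ − h·v_f⁺ ≥ δ_p` holds at the next time step. -/
theorem headway_one_step_invariance
    (h Δt τ ξdown δp pm vm pf vf pmp pfp vfp af : ℝ)
    (hh : 0 < h) (hΔt : 0 < Δt) (hτ : 0 ≤ τ) (hξ : 0 ≤ ξdown) (hδp : 0 ≤ δp)
    (hmeas : pmp - pm - Δt * vm ≥ -(τ * vm) - ξdown)
    (hpf : pfp = pf + Δt * vf)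
    (hvf : vfp = vf + Δt * af)
    (haf : af = (pm - pf - h * vf) / (h * Δt) + ((Δt - τ) * vm) / (h * Δt)
      - vf / h - (ξdown + δp) / (h * Δt)) :
    pmp - pfp - h * vfp ≥ δp := by
  have hhΔ : h * Δt ≠ 0 := by positivity
  have key : h * Δt * af = pm - pf - h * vf + (Δt - τ) * vm - Δt * vf - (ξdown + δp) := by
    rw [haf]; field_simp
  subst hpf hvf
  nlinarith [key, hmeas]
end
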